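/- Let A be a unital C*-algebra with unit 1, let L : A → ℝ be a seminorm with L(1) = 0, and let μ : A → ℂ be a continuous linear functional with ‖μ‖ = 1 and μ(1) = 1. Then: (i) if r ≥ 0 and inf{‖a − t·1‖ : t ∈ ℂ} ≤ r·L(a) for every a ∈ A, then ‖a‖ ≤ 2r·L(a) for every a ∈ A with μ(a) = 0; (ii) conversely, if k ≥ 0 and ‖a‖ ≤ k·L(a) for every a ∈ A with μ(a) = 0, then inf{‖a − t·1‖ : t ∈ ℂ} ≤ k·L(a) for every a ∈ A. -/
import Mathlib


/-- Proposition 2.4 of Rieffel, "Group C*-algebras as compact quantum metric spaces":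
relation between the quotient norm modulo scalars being controlled by a seminorm `L`
and the norm bound `‖a‖ ≤ k·L a` on the kernel of a state `μ`. -/
theorem stmt0 (A : Type*) [NormedRing A] [StarRing A] [CStarRing A]
    [NormedAlgebra ℂ A] [StarModule ℂ A]
    (L : Seminorm ℂ A) (hL1 : L 1 = 0)
    (μ : A →L[ℂ] ℂ) (hμnorm : ‖μ‖ = 1) (hμ1 : μ 1 = 1) :
    (∀ r : ℝ, 0 ≤ r →
      (∀ a : A, sInf (Set.range fun t : ℂ => ‖a - t • (1 : A)‖) ≤ r * L a) →
      ∀ a : A, μ a = 0 → ‖a‖ ≤ 2 * r * L a) ∧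
    (∀ k : ℝ, 0 ≤ k →
      (∀ a : A, μ a = 0 → ‖a‖ ≤ k * L a) →
      ∀ a : A, sInf (Set.range fun t : ℂ => ‖a - t • (1 : A)‖) ≤ k * L a) := by
  have hone : (1 : A) ≠ 0 := by
    intro h
    have : μ 1 = 0 := by rw [h, map_zero]
    rw [hμ1] at this
    exact one_ne_zero this
  have : Nontrivial A := ⟨1, 0, hone⟩
  have hnorm1 : ‖(1 : A)‖ = 1 := norm_one
  constructor
  · intro r hr hinf a hμa
    -- ∀ t, ‖a‖ ≤ 2 * ‖a - t • 1‖
    have key : ∀ t : ℂ, ‖a‖ ≤ 2 * ‖a - t • (1 : A)‖ := by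
      intro t
      have h1 : ‖μ (a - t • (1 : A))‖ ≤ ‖μ‖ * ‖a - t • (1 : A)‖ := μ.le_opNorm _
      have h2 : μ (a - t • (1 : A)) = -t := by
        simp [map_sub, hμa, hμ1]
      rw [h2, hμnorm, one_mul] at h1
      have ht : ‖t‖ ≤ ‖a - t • (1 : A)‖ := by simpa using h1
      calc ‖a‖ = ‖(a - t • (1 : A)) + t • (1 : A)‖ := by rw [sub_add_cancel]
        _ ≤ ‖a - t • (1 : A)‖ + ‖t • (1 : A)‖ := norm_add_le _ _
        _ = ‖a - t • (1 : A)‖ + ‖t‖ := by rw [norm_smul, hnorm1, mul_one]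
        _ ≤ ‖a - t • (1 : A)‖ + ‖a - t • (1 : A)‖ := by linarith
        _ = 2 * ‖a - t • (1 : A)‖ := by ring
    have hbdd : ‖a‖ / 2 ≤ sInf (Set.range fun t : ℂ => ‖a - t • (1 : A)‖) := by
      apply le_csInf (Set.range_nonempty _)
      rintro x ⟨t, rfl⟩
      linarith [key t]
    have := hinf a
    linarith
  · intro k hk hker a
    have hbdd : BddBelow (Set.range fun t : ℂ => ‖a - t • (1 : A)‖) := by
      refine ⟨0, ?_⟩
      rintro x ⟨t, rfl⟩
      exact norm_nonneg _
    have hmem : ‖a - (μ a) • (1 : A)‖ ∈ Set.range fun t : ℂ => ‖a - t • (1 : A)‖ :=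
      ⟨μ a, rfl⟩
    refine le_trans (csInf_le hbdd hmem) ?_
    have hμb : μ (a - (μ a) • (1 : A)) = 0 := by simp [map_sub, hμ1]
    have hLb : L (a - (μ a) • (1 : A)) ≤ L a := by
      calc L (a - (μ a) • (1 : A)) ≤ L a + L ((μ a) • (1 : A)) := by
            simpa using map_sub_le_add L a ((μ a) • (1 : A))
        _ = L a := by rw [map_smul_eq_mul, hL1, mul_zero, add_zero]
    calc ‖a - (μ a) • (1 : A)‖ ≤ k * L (a - (μ a) • (1 : A)) := hker _ hμb
      _ ≤ k * L a := by exact mul_le_mul_of_nonneg_left hLb hk
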